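/- Let n ≥ 2 and let M = [m_{ij}] be an n×n real B-Nekrasov matrix with decomposition M = B⁺ + C such that for each i = 1,…,n−1 there exists k > i with m_{ik} < r_i⁺. Let W = diag(w_1,…,w_n) with w_i = h_i(B⁺)/(m_{ii} − r_i⁺) for i = 1,…,n−1 and w_n = h_n(B⁺)/(m_{nn} − r_n⁺) + ε for a fixed ε ∈ (0, 1 − h_n(B⁺)/(m_{nn} − r_n⁺)), and suppose that B̄ = B⁺W = [b̄_{ij}] is a strictly diagonally dominant Z-matrix. Set β_i = b̄_{ii} − Σ_{j≠i} |b̄_{ij}|, δ_i = β_i/w_i, and δ = min_i δ_i. Then for every diagonal matrix D = diag(d_1,…,d_n) with 0 ≤ d_i ≤ 1 for all i, the matrix I − D + DM is invertible and ‖(I − D + DM)^{-1}‖_∞ ≤ (n − 1)(max_i w_i)/(min{δ, 1} · min_i w_i). -/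

import Mathlib

open Finset

noncomputable def nekH {n : ℕ} {𝕜 : Type*} [RCLike 𝕜] (A : Matrix (Fin n) (Fin n) 𝕜) : Fin n → ℝ
  | i =>
    (∑ j : Fin n, if h : j < i then ‖A i j‖ / ‖A j j‖ * nekH A j else 0)
      + ∑ j : Fin n, if i < j then ‖A i j‖ else 0
termination_by i => i.val
decreasing_by exact h

def IsNekrasov {n : ℕ} {𝕜 : Type*} [RCLike 𝕜] (A : Matrix (Fin n) (Fin n) 𝕜) : Prop :=
  ∀ i, nekH A i < ‖A i i‖

noncomputable def nekZ {n : ℕ} {𝕜 : Type*} [RCLike 𝕜] (A : Matrix (Fin n) (Fin n) 𝕜) : Fin n → ℝ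
  | i => (∑ j : Fin n, if h : j < i then ‖A i j‖ / ‖A j j‖ * nekZ A j else 0) + 1
termination_by i => i.val
decreasing_by exact h

noncomputable def nekEta {n : ℕ} {𝕜 : Type*} [RCLike 𝕜] (M : Matrix (Fin n) (Fin n) 𝕜) : Fin n → ℝ
  | i => (∑ j : Fin n, if h : j < i then ‖M i j‖ / min ‖M j j‖ 1 * nekEta M j else 0) + 1
termination_by i => i.val
decreasing_by exact h

noncomputable def linftyNorm {n : ℕ} {𝕜 : Type*} [RCLike 𝕜] (A : Matrix (Fin n) (Fin n) 𝕜) : ℝ :=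
  ⨆ i, ∑ j, ‖A i j‖

noncomputable def rPlus {n : ℕ} (M : Matrix (Fin n) (Fin n) ℝ) (i : Fin n) : ℝ :=
  Finset.fold max 0 (fun j => M i j) (Finset.univ.erase i)

noncomputable def BPlus {n : ℕ} (M : Matrix (Fin n) (Fin n) ℝ) : Matrix (Fin n) (Fin n) ℝ :=
  Matrix.of fun i j => M i j - rPlus M i

def IsBNekrasov {n : ℕ} (M : Matrix (Fin n) (Fin n) ℝ) : Prop :=
  IsNekrasov (BPlus M) ∧ ∀ i, 0 < BPlus M i i

def IsLCPSolution {n : ℕ} (M : Matrix (Fin n) (Fin n) ℝ) (q x : Fin n → ℝ) : Prop :=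
  (∀ i, 0 ≤ x i) ∧ (∀ i, 0 ≤ (M.mulVec x + q) i) ∧ ∑ i, (M.mulVec x + q) i * x i = 0

def IsPMatrix {n : ℕ} (M : Matrix (Fin n) (Fin n) ℝ) : Prop :=
  ∀ S : Finset (Fin n), 0 < (M.submatrix (fun i : S => (i : Fin n)) (fun j : S => (j : Fin n))).det



section Aux
variable {n : ℕ}


noncomputable def vsup (hne : (univ : Finset (Fin n)).Nonempty) (x : Fin n → ℝ) : ℝ :=
  univ.sup' hne (fun i => |x i|)

lemma abs_le_vsup (hne : (univ : Finset (Fin n)).Nonempty) (x : Fin n → ℝ) (i : Fin n) :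
    |x i| ≤ vsup hne x := Finset.le_sup' (fun i => |x i|) (mem_univ i)

lemma vsup_nonneg (hne : (univ : Finset (Fin n)).Nonempty) (x : Fin n → ℝ) : 0 ≤ vsup hne x :=
  le_trans (abs_nonneg _) (abs_le_vsup hne x hne.choose)

lemma vsup_le (hne : (univ : Finset (Fin n)).Nonempty) (x : Fin n → ℝ) {c : ℝ}
    (h : ∀ i, |x i| ≤ c) : vsup hne x ≤ c :=
  Finset.sup'_le _ _ fun i _ => h i

lemma varah (hne : (univ : Finset (Fin n)).Nonempty) (A : Matrix (Fin n) (Fin n) ℝ) {ρ : ℝ}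
    (hA : ∀ i, ρ ≤ A i i - ∑ j ∈ univ.erase i, |A i j|) (x : Fin n → ℝ) :
    ρ * vsup hne x ≤ vsup hne (A.mulVec x) := by
  obtain ⟨i, -, hi⟩ := Finset.exists_max_image univ (fun i => |x i|) hne
  have hxi : vsup hne x = |x i| :=
    le_antisymm (vsup_le hne x fun j => hi j (mem_univ j)) (abs_le_vsup hne x i)
  have key : ρ * |x i| ≤ |(A.mulVec x) i| := by
    have h1 : |A i i * x i| - |∑ j ∈ univ.erase i, A i j * x j| ≤ |(A.mulVec x) i| := by
      have heq : (A.mulVec x) i = A i i * x i + ∑ j ∈ univ.erase i, A i j * x j := by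
        rw [Matrix.mulVec, dotProduct, ← Finset.add_sum_erase _ _ (mem_univ i)]
      rw [heq]
      have := abs_add_le (A i i * x i + ∑ j ∈ univ.erase i, A i j * x j)
        (-(∑ j ∈ univ.erase i, A i j * x j))
      simp only [add_neg_cancel_right, abs_neg] at this
      linarith
    have h2 : |∑ j ∈ univ.erase i, A i j * x j| ≤ (∑ j ∈ univ.erase i, |A i j|) * |x i| := by
      calc |∑ j ∈ univ.erase i, A i j * x j| ≤ ∑ j ∈ univ.erase i, |A i j * x j| :=
            Finset.abs_sum_le_sum_abs _ _
        _ ≤ ∑ j ∈ univ.erase i, |A i j| * |x i| := by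
            refine Finset.sum_le_sum fun j _ => ?_
            rw [abs_mul]
            exact mul_le_mul_of_nonneg_left (hi j (mem_univ j)) (abs_nonneg _)
        _ = (∑ j ∈ univ.erase i, |A i j|) * |x i| := by rw [Finset.sum_mul]
    have h3 : ρ * |x i| ≤ (A i i - ∑ j ∈ univ.erase i, |A i j|) * |x i| :=
      mul_le_mul_of_nonneg_right (hA i) (abs_nonneg _)
    have h4 : (A i i - ∑ j ∈ univ.erase i, |A i j|) * |x i| ≤
        |A i i * x i| - (∑ j ∈ univ.erase i, |A i j|) * |x i| := by
      rw [abs_mul, sub_mul]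
      have : A i i ≤ |A i i| := le_abs_self _
      nlinarith [abs_nonneg (x i)]
    linarith
  calc ρ * vsup hne x = ρ * |x i| := by rw [hxi]
    _ ≤ |(A.mulVec x) i| := key
    _ ≤ vsup hne (A.mulVec x) := abs_le_vsup hne _ i

lemma zmono (A : Matrix (Fin n) (Fin n) ℝ)
    (hoff : ∀ i j, i ≠ j → A i j ≤ 0)
    (hexc : ∀ i, 0 < A i i - ∑ j ∈ univ.erase i, |A i j|)
    (z : Fin n → ℝ) (hz : ∀ i, 0 ≤ A.mulVec z i) (hne : (univ : Finset (Fin n)).Nonempty) :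
    ∀ i, 0 ≤ z i := by
  by_contra hcon
  push_neg at hcon
  obtain ⟨k, -, hk⟩ := Finset.exists_min_image univ z hne
  obtain ⟨i0, hi0⟩ := hcon
  have hzk : z k < 0 := lt_of_le_of_lt (hk i0 (mem_univ i0)) hi0
  have h1 : A.mulVec z k = A k k * z k + ∑ j ∈ univ.erase k, A k j * z j := by
    rw [Matrix.mulVec, dotProduct, ← Finset.add_sum_erase _ _ (mem_univ k)]
  have h2 : ∑ j ∈ univ.erase k, A k j * z j ≤ ∑ j ∈ univ.erase k, A k j * z k := by
    refine Finset.sum_le_sum fun j hj => ?_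
    have hne' : k ≠ j := fun h => (Finset.mem_erase.mp hj).1 h.symm
    have := hoff k j hne'
    nlinarith [hk j (mem_univ j)]
  have h3 : ∑ j ∈ univ.erase k, A k j * z k = (∑ j ∈ univ.erase k, A k j) * z k := by
    rw [Finset.sum_mul]
  have h4 : (∑ j ∈ univ.erase k, A k j) * z k ≤ (-(∑ j ∈ univ.erase k, |A k j|)) * z k := by
    have hle : -(∑ j ∈ univ.erase k, |A k j|) ≤ ∑ j ∈ univ.erase k, A k j := by
      rw [← Finset.sum_neg_distrib]
      refine Finset.sum_le_sum fun j hj => ?_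
      have hne' : k ≠ j := fun h => (Finset.mem_erase.mp hj).1 h.symm
      have := hoff k j hne'
      rw [abs_of_nonpos this]; linarith
    nlinarith
  have h5 : A.mulVec z k ≤ (A k k - ∑ j ∈ univ.erase k, |A k j|) * z k := by
    rw [h1]; nlinarith
  have := hz k
  nlinarith [hexc k, hzk]

set_option maxHeartbeats 1600000 in
lemma key_bound (hn : 2 ≤ n) (hne : (univ : Finset (Fin n)).Nonempty)
    (BD A N : Matrix (Fin n) (Fin n) ℝ) (w v : Fin n → ℝ)
    (hw : ∀ i, 0 < w i) (hv : ∀ i, 0 ≤ v i)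
    (hA : A = BD * Matrix.diagonal w)
    (hoff : ∀ i j, i ≠ j → A i j ≤ 0)
    {ρ : ℝ} (hρ : 0 < ρ)
    (hexc : ∀ i, ρ ≤ A i i - ∑ j ∈ univ.erase i, |A i j|)
    {wmax : ℝ} (hwmax : ∀ i, w i ≤ wmax)
    (hN : ∀ i j, N i j = BD i j + v i)
    (x : Fin n → ℝ) :
    ρ * vsup hne x ≤ ((n : ℝ) - 1) * wmax * vsup hne (N.mulVec x) := by
  have hexc0 : ∀ i, 0 < A i i - ∑ j ∈ univ.erase i, |A i j| := fun i => lt_of_lt_of_le hρ (hexc i)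
  -- A invertible
  have hdetA : A.det ≠ 0 := by
    intro h
    obtain ⟨p, hp0, hp⟩ := Matrix.exists_mulVec_eq_zero_iff.mpr h
    have hv0 : vsup hne (A.mulVec p) = 0 := by
      rw [hp]
      refine le_antisymm (vsup_le hne _ fun i => by simp) (vsup_nonneg hne _)
    have := varah hne A hexc p
    rw [hv0] at this
    have hps : vsup hne p ≤ 0 := nonpos_of_mul_nonpos_right ?_ hρ
    · exact hp0 (funext fun i => abs_eq_zero.mp
        (le_antisymm (le_trans (abs_le_vsup hne p i) hps) (abs_nonneg _)))
    · linarith [this]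
  have hU : IsUnit A.det := isUnit_iff_ne_zero.mpr hdetA
  have hBDmul : ∀ p : Fin n → ℝ, A.mulVec p = BD.mulVec (fun j => w j * p j) := by
    intro p
    rw [hA, ← Matrix.mulVec_mulVec]
    congr 1
    funext i
    simp [Matrix.mulVec, dotProduct, Matrix.diagonal]
  have hAi : ∀ p : Fin n → ℝ, A⁻¹.mulVec (A.mulVec p) = p := by
    intro p
    rw [Matrix.mulVec_mulVec, Matrix.nonsing_inv_mul A hU, Matrix.one_mulVec]
  have hAs : ∀ p : Fin n → ℝ, A.mulVec (A⁻¹.mulVec p) = p := by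
    intro p
    rw [Matrix.mulVec_mulVec, Matrix.mul_nonsing_inv A hU, Matrix.one_mulVec]
  set y := N.mulVec x with hy
  set s := ∑ j, x j with hs_def
  have hNx : BD.mulVec x = y - s • v := by
    funext i
    have h1 : y i = (∑ j, BD i j * x j) + v i * (∑ j, x j) := by
      simp only [hy, Matrix.mulVec, dotProduct, hN, add_mul, Finset.sum_add_distrib,
        ← Finset.mul_sum]
    simp only [Pi.sub_apply, Pi.smul_apply, smul_eq_mul, Matrix.mulVec, dotProduct]
    rw [h1, hs_def]; ring
  set z := A⁻¹.mulVec v with hz_def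
  have hzv : A.mulVec z = v := hAs v
  have hz0 : ∀ i, 0 ≤ z i :=
    zmono A hoff hexc0 z (fun i => by rw [hzv]; exact hv i) hne
  set q := A⁻¹.mulVec y with hq_def
  have hqy : A.mulVec q = y := hAs y
  set u : Fin n → ℝ := fun i => w i * z i with hu_def
  have hu0 : ∀ i, 0 ≤ u i := fun i => mul_nonneg (hw i).le (hz0 i)
  set σ := ∑ i, u i with hσ_def
  have hσ0 : 0 ≤ σ := Finset.sum_nonneg fun i _ => hu0 i
  have hσpos : 0 < 1 + σ := by linarith
  -- identity x = g - s u
  have hxw : A.mulVec (fun j => x j / w j) = y - s • v := by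
    rw [hBDmul]
    have : (fun j => w j * (x j / w j)) = x := funext fun j => by
      rw [mul_comm, div_mul_cancel₀ _ (hw j).ne']
    rw [this, hNx]
  have hxq : (fun j => x j / w j) = fun j => q j - s * z j := by
    have h1 := congrArg (A⁻¹.mulVec ·) hxw
    rw [hAi] at h1
    rw [h1, Matrix.mulVec_sub, Matrix.mulVec_smul]
    funext j
    simp [hq_def, hz_def]
  set g : Fin n → ℝ := fun i => w i * q i with hg_def
  have hxg : ∀ i, x i = g i - s * u i := by
    intro i
    have h := congrFun hxq i
    have : x i = (q i - s * z i) * w i := (div_eq_iff (hw i).ne').mp h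
    rw [this, hg_def, hu_def]; ring
  have hs : s * (1 + σ) = ∑ j, g j := by
    have hsum : ∑ i, x i = (∑ i, g i) - s * σ := by
      rw [Finset.sum_congr rfl fun i _ => hxg i, Finset.sum_sub_distrib, ← Finset.mul_sum]
    have : s = (∑ i, g i) - s * σ := hs_def.trans hsum
    linarith [this]
  set G := vsup hne g with hG_def
  have hG0 : 0 ≤ G := vsup_nonneg hne g
  have hwmax0 : 0 ≤ wmax := le_trans (hw hne.choose).le (hwmax hne.choose)
  have hGy : ρ * G ≤ wmax * vsup hne y := by
    have h1 : ρ * vsup hne q ≤ vsup hne y := by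
      have := varah hne A hexc q
      rwa [hqy] at this
    have h2 : G ≤ wmax * vsup hne q := by
      refine vsup_le hne g fun i => ?_
      rw [hg_def]
      simp only
      rw [abs_mul, abs_of_pos (hw i)]
      exact mul_le_mul (hwmax i) (abs_le_vsup hne q i) (abs_nonneg _) hwmax0
    nlinarith [vsup_nonneg hne q, vsup_nonneg hne y]
  have hcard : ((univ.erase (hne.choose)).card : ℝ) = (n : ℝ) - 1 := by
    rw [Finset.card_erase_of_mem (mem_univ _), Finset.card_univ, Fintype.card_fin]
    have : (1:ℕ) ≤ n := by omega
    push_cast [Nat.cast_sub this]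
    ring
  have hx_bound : ∀ i, |x i| ≤ ((n : ℝ) - 1) * G := by
    intro i
    have hs' : s = (∑ j, g j) / (1 + σ) := by
      rw [eq_div_iff hσpos.ne']; exact hs
    have hsplit : ∑ j, g j = g i + ∑ j ∈ univ.erase i, g j :=
      (Finset.add_sum_erase _ _ (mem_univ i)).symm
    have hxi : x i = g i * (1 - u i / (1 + σ)) - (u i / (1 + σ)) * (∑ j ∈ univ.erase i, g j) := by
      rw [hxg i, hs', hsplit]
      field_simp
      ring
    set t := u i / (1 + σ) with ht_def
    have ht0 : 0 ≤ t := div_nonneg (hu0 i) hσpos.le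
    have ht1 : t ≤ 1 := by
      rw [ht_def, div_le_one hσpos]
      have : u i ≤ σ := Finset.single_le_sum (fun j _ => hu0 j) (mem_univ i)
      linarith
    have hgi : |g i| ≤ G := abs_le_vsup hne g i
    have hsumb : |∑ j ∈ univ.erase i, g j| ≤ ((n : ℝ) - 1) * G := by
      calc |∑ j ∈ univ.erase i, g j| ≤ ∑ j ∈ univ.erase i, |g j| :=
            Finset.abs_sum_le_sum_abs _ _
        _ ≤ ∑ _j ∈ univ.erase i, G := Finset.sum_le_sum fun j _ => abs_le_vsup hne g j
        _ = ((univ.erase i).card : ℝ) * G := by rw [Finset.sum_const, nsmul_eq_mul]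
        _ = ((n : ℝ) - 1) * G := by
            rw [Finset.card_erase_of_mem (mem_univ _), Finset.card_univ, Fintype.card_fin]
            congr 1
            have : (1:ℕ) ≤ n := by omega
            push_cast [Nat.cast_sub this]
            ring
    have hn' : (2 : ℝ) ≤ (n : ℝ) := by exact_mod_cast hn
    have habs : |x i| ≤ |g i| * (1 - t) + t * |∑ j ∈ univ.erase i, g j| := by
      rw [hxi]
      calc |g i * (1 - t) - t * (∑ j ∈ univ.erase i, g j)|
          ≤ |g i * (1 - t)| + |t * (∑ j ∈ univ.erase i, g j)| := abs_sub _ _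
        _ = |g i| * (1 - t) + t * |∑ j ∈ univ.erase i, g j| := by
            rw [abs_mul (g i) (1 - t), abs_mul t (∑ j ∈ univ.erase i, g j),
              abs_of_nonneg (by linarith : (0:ℝ) ≤ 1 - t), abs_of_nonneg ht0]
    have e1 : |g i| * (1 - t) ≤ G * (1 - t) :=
      mul_le_mul_of_nonneg_right hgi (by linarith)
    have e2 : t * |∑ j ∈ univ.erase i, g j| ≤ t * (((n : ℝ) - 1) * G) :=
      mul_le_mul_of_nonneg_left hsumb ht0
    have e3 : ((n : ℝ) - 2) * (t * G) ≤ ((n : ℝ) - 2) * G :=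
      mul_le_mul_of_nonneg_left
        (by nlinarith) (by linarith)
    nlinarith [habs]
  have hvx : vsup hne x ≤ ((n : ℝ) - 1) * G := vsup_le hne x hx_bound
  have hn' : (2 : ℝ) ≤ (n : ℝ) := by exact_mod_cast hn
  nlinarith [vsup_nonneg hne x, vsup_nonneg hne y, hGy, hvx]

end Aux

section MainAux
variable {n : ℕ}

lemma nekH_eq (A : Matrix (Fin n) (Fin n) ℝ) (i : Fin n) :
    nekH A i = (∑ j : Fin n, if h : j < i then ‖A i j‖ / ‖A j j‖ * nekH A j else 0)
      + ∑ j : Fin n, if i < j then ‖A i j‖ else 0 := by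
  rw [nekH]

lemma nekH_nonneg_aux (A : Matrix (Fin n) (Fin n) ℝ) :
    ∀ m : ℕ, ∀ i : Fin n, i.val < m → 0 ≤ nekH A i := by
  intro m
  induction m with
  | zero => exact fun i h => absurd h (by omega)
  | succ m ih =>
    intro i hi
    rw [nekH_eq]
    refine add_nonneg (Finset.sum_nonneg fun j _ => ?_) (Finset.sum_nonneg fun j _ => ?_)
    · split
      · next h =>
          have hj : j.val < i.val := h
          exact mul_nonneg (div_nonneg (norm_nonneg _) (norm_nonneg _)) (ih j (by omega))
      · exact le_refl 0
    · positivity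

lemma nekH_nonneg (A : Matrix (Fin n) (Fin n) ℝ) (i : Fin n) : 0 ≤ nekH A i :=
  nekH_nonneg_aux A (i.val + 1) i (by omega)

end MainAux

set_option maxHeartbeats 1600000 in
theorem stmt15 {n : ℕ} (hn : 2 ≤ n) (M : Matrix (Fin n) (Fin n) ℝ)
    (hBN : IsBNekrasov M)
    (hrow : ∀ i : Fin n, i.val + 1 < n → ∃ k, i < k ∧ M i k < rPlus M i)
    (ε : ℝ) (hε : 0 < ε)
    (hε' : ε < 1 - nekH (BPlus M) ⟨n - 1, by omega⟩ /
      (M ⟨n - 1, by omega⟩ ⟨n - 1, by omega⟩ - rPlus M ⟨n - 1, by omega⟩))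
    (w : Fin n → ℝ)
    (hw : ∀ i : Fin n, i.val + 1 < n → w i = nekH (BPlus M) i / (M i i - rPlus M i))
    (hwn : w ⟨n - 1, by omega⟩ = nekH (BPlus M) ⟨n - 1, by omega⟩ /
      (M ⟨n - 1, by omega⟩ ⟨n - 1, by omega⟩ - rPlus M ⟨n - 1, by omega⟩) + ε)
    (hZ : ∀ i j, i ≠ j → (BPlus M * Matrix.diagonal w) i j ≤ 0)
    (hSDD : ∀ i, ∑ j ∈ Finset.univ.erase i, |(BPlus M * Matrix.diagonal w) i j| <
      |(BPlus M * Matrix.diagonal w) i i|)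
    (β δ : Fin n → ℝ)
    (hβ : ∀ i, β i = (BPlus M * Matrix.diagonal w) i i -
      ∑ j ∈ Finset.univ.erase i, |(BPlus M * Matrix.diagonal w) i j|)
    (hδ : ∀ i, δ i = β i / w i)
    (d : Fin n → ℝ) (hd : ∀ i, 0 ≤ d i ∧ d i ≤ 1) :
    IsUnit (1 - Matrix.diagonal d + Matrix.diagonal d * M).det ∧
      linftyNorm (1 - Matrix.diagonal d + Matrix.diagonal d * M)⁻¹ ≤
        (n - 1 : ℝ) * Finset.univ.sup' ⟨⟨0, by omega⟩, Finset.mem_univ _⟩ w /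
          (min (Finset.univ.inf' ⟨⟨0, by omega⟩, Finset.mem_univ _⟩ δ) 1 *
            Finset.univ.inf' ⟨⟨0, by omega⟩, Finset.mem_univ _⟩ w) := by
  have hne : (univ : Finset (Fin n)).Nonempty := ⟨⟨0, by omega⟩, mem_univ _⟩
  set N := 1 - Matrix.diagonal d + Matrix.diagonal d * M with hN_def
  have hB0 : ∀ i, 0 < BPlus M i i := hBN.2
  have hBM : ∀ i j, BPlus M i j = M i j - rPlus M i := fun i j => rfl
  -- positivity of w
  have hw0 : ∀ i, 0 < w i := by
    intro i
    by_cases hi : i.val + 1 < n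
    · obtain ⟨k, hik, hk⟩ := hrow i hi
      have hBik : BPlus M i k < 0 := by rw [hBM]; linarith
      have hpos : 0 < nekH (BPlus M) i := by
        rw [nekH_eq]
        have h1 : 0 ≤ ∑ j : Fin n,
            if h : j < i then ‖BPlus M i j‖ / ‖BPlus M j j‖ * nekH (BPlus M) j else 0 :=
          Finset.sum_nonneg fun j _ => by
            split
            · exact mul_nonneg (div_nonneg (norm_nonneg _) (norm_nonneg _)) (nekH_nonneg _ _)
            · exact le_refl 0
        have h2 : (if i < k then ‖BPlus M i k‖ else 0) ≤
            ∑ j : Fin n, if i < j then ‖BPlus M i j‖ else 0 :=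
          Finset.single_le_sum (f := fun j => if i < j then ‖BPlus M i j‖ else 0)
            (fun j _ => by split <;> simp [norm_nonneg]) (mem_univ k)
        rw [if_pos hik] at h2
        have h3 : 0 < ‖BPlus M i k‖ := norm_pos_iff.mpr hBik.ne
        linarith
      rw [hw i hi]
      have hden : 0 < M i i - rPlus M i := by have := hB0 i; rwa [hBM] at this
      exact div_pos hpos hden
    · have hieq : i = ⟨n - 1, by omega⟩ := by
        apply Fin.ext
        have := i.isLt
        simp only []
        omega
      rw [hieq, hwn]
      have hden : 0 < M ⟨n - 1, by omega⟩ ⟨n - 1, by omega⟩ - rPlus M ⟨n - 1, by omega⟩ := by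
        have := hB0 ⟨n - 1, by omega⟩; rwa [hBM] at this
      have h0 : 0 ≤ nekH (BPlus M) ⟨n - 1, by omega⟩ /
          (M ⟨n - 1, by omega⟩ ⟨n - 1, by omega⟩ - rPlus M ⟨n - 1, by omega⟩) :=
        div_nonneg (nekH_nonneg _ _) hden.le
      linarith
  -- the scaled matrix Bb
  have hBbe : ∀ i j, (BPlus M * Matrix.diagonal w) i j = BPlus M i j * w j :=
    fun i j => Matrix.mul_diagonal w (BPlus M) i j
  have hBbd : ∀ i, 0 < (BPlus M * Matrix.diagonal w) i i := fun i => by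
    rw [hBbe]; exact mul_pos (hB0 i) (hw0 i)
  have hβpos : ∀ i, 0 < β i := by
    intro i
    rw [hβ i]
    have h := hSDD i
    rw [abs_of_pos (hBbd i)] at h
    linarith
  have hβw : ∀ i, β i = δ i * w i := fun i => by
    rw [hδ i, div_mul_cancel₀ _ (hw0 i).ne']
  -- extrema of w and δ
  set wmax := Finset.univ.sup' hne w with hwmax_def
  set wmin := Finset.univ.inf' hne w with hwmin_def
  set δmin := Finset.univ.inf' hne δ with hδmin_def
  have hwmin : 0 < wmin := (Finset.lt_inf'_iff hne).mpr fun i _ => hw0 i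
  have hδminpos : 0 < δmin := (Finset.lt_inf'_iff hne).mpr fun i _ => by
    rw [hδ i]; exact div_pos (hβpos i) (hw0 i)
  set ρ := min δmin 1 * wmin with hρ_def
  have hρ : 0 < ρ := mul_pos (lt_min hδminpos one_pos) hwmin
  -- the matrices BD and A
  set BD : Matrix (Fin n) (Fin n) ℝ :=
    Matrix.of (fun i j => (if i = j then 1 - d i else 0) + d i * BPlus M i j) with hBD_def
  set A := BD * Matrix.diagonal w with hA_def
  have hAe : ∀ i j, A i j = BD i j * w j := fun i j => Matrix.mul_diagonal w BD i j
  have hAoff : ∀ i j, i ≠ j → A i j ≤ 0 := by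
    intro i j hij
    rw [hAe, hBD_def]
    simp only [Matrix.of_apply, if_neg hij, zero_add]
    have h1 := hZ i j hij
    rw [hBbe] at h1
    have h2 := (hd i).1
    calc d i * BPlus M i j * w j = d i * (BPlus M i j * w j) := by ring
      _ ≤ 0 := mul_nonpos_of_nonneg_of_nonpos h2 h1
  have hAexc : ∀ i, ρ ≤ A i i - ∑ j ∈ univ.erase i, |A i j| := by
    intro i
    have hdi := hd i
    have hAii : A i i = (1 - d i) * w i + d i * ((BPlus M * Matrix.diagonal w) i i) := by
      rw [hAe, hBbe, hBD_def]
      simp only [Matrix.of_apply]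
      split_ifs with hc
      · ring
      · exact absurd trivial hc
    have hsum : ∑ j ∈ univ.erase i, |A i j| =
        d i * ∑ j ∈ univ.erase i, |(BPlus M * Matrix.diagonal w) i j| := by
      rw [Finset.mul_sum]
      refine Finset.sum_congr rfl fun j hj => ?_
      have hji : ¬ i = j := fun h => (Finset.mem_erase.mp hj).1 h.symm
      rw [hAe, hBD_def]
      simp only [Matrix.of_apply, if_neg hji, zero_add]
      rw [mul_assoc, abs_mul, abs_of_nonneg hdi.1, hBbe]
    rw [hAii, hsum]
    have hβi := hβ i
    have hδi : δmin ≤ δ i := Finset.inf'_le δ (mem_univ i)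
    have hβδ : δmin * w i ≤ β i := by
      rw [hβw i]
      exact mul_le_mul_of_nonneg_right hδi (hw0 i).le
    have h1 : min δmin 1 ≤ 1 := min_le_right _ _
    have h2 : min δmin 1 ≤ δmin := min_le_left _ _
    have h3 : wmin ≤ w i := Finset.inf'_le w (mem_univ i)
    have h4 : 0 < min δmin 1 := lt_min hδminpos one_pos
    have e1 : min δmin 1 * wmin ≤ min δmin 1 * w i :=
      mul_le_mul_of_nonneg_left h3 h4.le
    have e2 : (1 - d i) * (min δmin 1 * w i) ≤ (1 - d i) * w i := by
      have : min δmin 1 * w i ≤ w i := by nlinarith [hw0 i]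
      exact mul_le_mul_of_nonneg_left this (by linarith [hdi.2])
    have e3 : d i * (min δmin 1 * w i) ≤ d i * β i := by
      have : min δmin 1 * w i ≤ β i := by nlinarith [hw0 i]
      exact mul_le_mul_of_nonneg_left this hdi.1
    rw [hρ_def]
    nlinarith [e1, e2, e3]
  -- the vector v
  set v : Fin n → ℝ := fun i => d i * rPlus M i with hv_def
  have hr0 : ∀ i, 0 ≤ rPlus M i := fun i => by
    unfold rPlus
    exact (Finset.le_fold_max 0).mpr (Or.inl le_rfl)
  have hv0 : ∀ i, 0 ≤ v i := fun i => mul_nonneg (hd i).1 (hr0 i)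
  have hNe : ∀ i j, N i j = BD i j + v i := by
    intro i j
    rw [hN_def, hBD_def, hv_def]
    simp only [Matrix.add_apply, Matrix.sub_apply, Matrix.one_apply, Matrix.diagonal_apply,
      Matrix.diagonal_mul, Matrix.of_apply, hBM]
    by_cases h : i = j <;> simp [h] <;> ring
  have hwmaxle : ∀ i, w i ≤ wmax := fun i => Finset.le_sup' w (mem_univ i)
  have key : ∀ x : Fin n → ℝ,
      ρ * vsup hne x ≤ ((n : ℝ) - 1) * wmax * vsup hne (N.mulVec x) :=
    key_bound hn hne BD A N w v hw0 hv0 hA_def hAoff hρ hAexc hwmaxle hNe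
  -- invertibility
  have hdetN : N.det ≠ 0 := by
    intro h
    obtain ⟨p, hp0, hp⟩ := Matrix.exists_mulVec_eq_zero_iff.mpr h
    have hk := key p
    rw [hp] at hk
    have hz : vsup hne (0 : Fin n → ℝ) = 0 :=
      le_antisymm (vsup_le hne _ fun i => by simp) (vsup_nonneg hne _)
    rw [hz, mul_zero] at hk
    have hps : vsup hne p ≤ 0 := nonpos_of_mul_nonpos_right (by linarith) hρ
    exact hp0 (funext fun i => abs_eq_zero.mp
      (le_antisymm (le_trans (abs_le_vsup hne p i) hps) (abs_nonneg _)))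
  have hUnit : IsUnit N.det := isUnit_iff_ne_zero.mpr hdetN
  refine ⟨hUnit, ?_⟩
  -- norm bound
  have hNinv : N * N⁻¹ = 1 := Matrix.mul_nonsing_inv N hUnit
  have hfinal : linftyNorm N⁻¹ ≤ ((n : ℝ) - 1) * wmax / (min δmin 1 * wmin) := by
    have hKnn : 0 ≤ ((n : ℝ) - 1) * wmax := by
      have hn' : (2 : ℝ) ≤ (n : ℝ) := by exact_mod_cast hn
      have : 0 < wmax := lt_of_lt_of_le (hw0 hne.choose) (hwmaxle hne.choose)
      nlinarith
    have hnonempty : Nonempty (Fin n) := ⟨⟨0, by omega⟩⟩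
    unfold linftyNorm
    refine ciSup_le fun i => ?_
    set sgn : Fin n → ℝ := fun j => if 0 ≤ N⁻¹ i j then 1 else -1 with hsgn_def
    set p := N⁻¹.mulVec sgn with hp_def
    have hNp : N.mulVec p = sgn := by
      rw [hp_def, Matrix.mulVec_mulVec, hNinv, Matrix.one_mulVec]
    have hsgn1 : vsup hne sgn ≤ 1 := vsup_le hne _ fun j => by
      rw [hsgn_def]
      by_cases h : 0 ≤ N⁻¹ i j <;> simp [h]
    have hk := key p
    rw [hNp] at hk
    have hk2 : ρ * vsup hne p ≤ ((n : ℝ) - 1) * wmax := by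
      calc ρ * vsup hne p ≤ ((n : ℝ) - 1) * wmax * vsup hne sgn := hk
        _ ≤ ((n : ℝ) - 1) * wmax * 1 := mul_le_mul_of_nonneg_left hsgn1 hKnn
        _ = ((n : ℝ) - 1) * wmax := mul_one _
    have hpi : ∑ j, ‖N⁻¹ i j‖ = p i := by
      rw [hp_def]
      simp only [Matrix.mulVec, dotProduct]
      refine Finset.sum_congr rfl fun j _ => ?_
      rw [hsgn_def]
      dsimp only
      rw [Real.norm_eq_abs]
      by_cases h : 0 ≤ N⁻¹ i j
      · rw [if_pos h, mul_one, abs_of_nonneg h]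
      · rw [if_neg h, abs_of_neg (lt_of_not_ge h)]; ring
    rw [hpi]
    have h1 : p i ≤ vsup hne p := le_trans (le_abs_self _) (abs_le_vsup hne p i)
    have h2 : vsup hne p ≤ ((n : ℝ) - 1) * wmax / ρ := by
      rw [le_div_iff₀ hρ]
      linarith [hk2]
    rw [hρ_def] at h2
    linarith
  exact hfinal
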